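/- In the Lie coalgebra with structure equations de¹ = 0, de² = -e²∧e⁴ - e¹∧e⁶, de³ = e³∧e⁴ - e¹∧e⁵, de⁴ = 0, de⁵ = -e⁴∧e⁵, de⁶ = e⁴∧e⁶, the 2-form ω = e¹∧e⁴ + e²∧e⁵ + e³∧e⁶ is closed and the real part of Ω = (e¹+ie⁴)∧(e²+ie⁵)∧(e³+ie⁶) is closed (a type IIA structure on the algebra (16+35, -26+45, 36, -46, 0, 0)). -/
import Mathlib

set_option maxHeartbeats 1000000

open ExteriorAlgebra

/-- Basis 1-forms e¹,…,e⁶ (indexed 0,…,5). -/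
noncomputable def e (i : Fin 6) : ExteriorAlgebra ℝ (Fin 6 → ℝ) :=
  ExteriorAlgebra.ι ℝ (Pi.single i 1)

lemma esq (i : Fin 6) : e i * e i = 0 := ExteriorAlgebra.ι_sq_zero _

lemma eswap (i j : Fin 6) : e i * e j = -(e j * e i) :=
  eq_neg_of_add_eq_zero_left (ExteriorAlgebra.ι_add_mul_swap _ _)

lemma esq' (i : Fin 6) (x : ExteriorAlgebra ℝ (Fin 6 → ℝ)) : e i * (e i * x) = 0 := by
  rw [← mul_assoc, esq, zero_mul]

lemma eswap' (i j : Fin 6) (x : ExteriorAlgebra ℝ (Fin 6 → ℝ)) :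
    e i * (e j * x) = -(e j * (e i * x)) := by
  rw [← mul_assoc, eswap, ← mul_assoc, neg_mul]

lemma pi_single_expand (x : Fin 6 → ℝ) :
    x = ∑ i : Fin 6, x i • (Pi.single i 1 : Fin 6 → ℝ) := by
  funext j
  simp [Finset.sum_apply, Pi.single_apply]

/-- In the Lie coalgebra with de¹ = 0, de² = -e²∧e⁴ - e¹∧e⁶, de³ = e³∧e⁴ - e¹∧e⁵,
de⁴ = 0, de⁵ = -e⁴∧e⁵, de⁶ = e⁴∧e⁶ (the algebra (16+35,-26+45,36,-46,0,0)), the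
Chevalley–Eilenberg differential satisfies d² = 0 (Jacobi), ω = e¹∧e⁴+e²∧e⁵+e³∧e⁶
is closed, and Re Ω = e¹∧e²∧e³ - e¹∧e⁵∧e⁶ - e⁴∧e²∧e⁶ - e⁴∧e⁵∧e³ is closed. -/
theorem stmt17
    (d : ExteriorAlgebra ℝ (Fin 6 → ℝ) →ₗ[ℝ] ExteriorAlgebra ℝ (Fin 6 → ℝ))
    (hone : d 1 = 0)
    (hder : ∀ (x : Fin 6 → ℝ) (ω : ExteriorAlgebra ℝ (Fin 6 → ℝ)),
      d (ExteriorAlgebra.ι ℝ x * ω) = d (ExteriorAlgebra.ι ℝ x) * ω -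
        ExteriorAlgebra.ι ℝ x * d ω)
    (h1 : d (e 0) = 0)
    (h2 : d (e 1) = -(e 1 * e 3) - e 0 * e 5)
    (h3 : d (e 2) = e 2 * e 3 - e 0 * e 4)
    (h4 : d (e 3) = 0)
    (h5 : d (e 4) = -(e 3 * e 4))
    (h6 : d (e 5) = e 3 * e 5) :
    d ∘ₗ d = 0 ∧
      d (e 0 * e 3 + e 1 * e 4 + e 2 * e 5) = 0 ∧
      d (e 0 * e 1 * e 2 - e 0 * e 4 * e 5 - e 3 * e 1 * e 5 - e 3 * e 4 * e 2) = 0 := by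
  have key : ∀ (i : Fin 6) ω, d (e i * ω) = d (e i) * ω - e i * d ω := fun i ω => hder _ ω
  have K0 : ∀ ω, d (d (e 0 * ω)) = e 0 * d (d ω) := by
    intro ω
    simp only [key, h1, h2, h3, h4, h5, h6, map_sub, map_neg, map_zero, sub_mul, add_mul,
      neg_mul, mul_neg, mul_sub, mul_add, mul_assoc, zero_mul, mul_zero, zero_sub, sub_zero,
      neg_neg, esq, esq', eswap' 5 3, eswap' 4 3, eswap' 5 4, eswap 5 3, eswap 4 3, eswap 5 4]
    try abel
  have K1 : ∀ ω, d (d (e 1 * ω)) = e 1 * d (d ω) := by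
    intro ω
    simp only [key, h1, h2, h3, h4, h5, h6, map_sub, map_neg, map_zero, sub_mul, add_mul,
      neg_mul, mul_neg, mul_sub, mul_add, mul_assoc, zero_mul, mul_zero, zero_sub, sub_zero,
      neg_neg, esq, esq', eswap' 5 3, eswap' 4 3, eswap' 5 4, eswap 5 3, eswap 4 3, eswap 5 4]
    try abel
  have K2 : ∀ ω, d (d (e 2 * ω)) = e 2 * d (d ω) := by
    intro ω
    simp only [key, h1, h2, h3, h4, h5, h6, map_sub, map_neg, map_zero, sub_mul, add_mul,
      neg_mul, mul_neg, mul_sub, mul_add, mul_assoc, zero_mul, mul_zero, zero_sub, sub_zero,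
      neg_neg, esq, esq', eswap' 5 3, eswap' 4 3, eswap' 5 4, eswap 5 3, eswap 4 3, eswap 5 4]
    try abel
  have K3 : ∀ ω, d (d (e 3 * ω)) = e 3 * d (d ω) := by
    intro ω
    simp only [key, h1, h2, h3, h4, h5, h6, map_sub, map_neg, map_zero, sub_mul, add_mul,
      neg_mul, mul_neg, mul_sub, mul_add, mul_assoc, zero_mul, mul_zero, zero_sub, sub_zero,
      neg_neg, esq, esq', eswap' 5 3, eswap' 4 3, eswap' 5 4, eswap 5 3, eswap 4 3, eswap 5 4]
    try abel
  have K4 : ∀ ω, d (d (e 4 * ω)) = e 4 * d (d ω) := by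
    intro ω
    simp only [key, h1, h2, h3, h4, h5, h6, map_sub, map_neg, map_zero, sub_mul, add_mul,
      neg_mul, mul_neg, mul_sub, mul_add, mul_assoc, zero_mul, mul_zero, zero_sub, sub_zero,
      neg_neg, esq, esq', eswap' 5 3, eswap' 4 3, eswap' 5 4, eswap 5 3, eswap 4 3, eswap 5 4]
    try abel
  have K5 : ∀ ω, d (d (e 5 * ω)) = e 5 * d (d ω) := by
    intro ω
    simp only [key, h1, h2, h3, h4, h5, h6, map_sub, map_neg, map_zero, sub_mul, add_mul,
      neg_mul, mul_neg, mul_sub, mul_add, mul_assoc, zero_mul, mul_zero, zero_sub, sub_zero,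
      neg_neg, esq, esq', eswap' 5 3, eswap' 4 3, eswap' 5 4, eswap 5 3, eswap 4 3, eswap 5 4]
    try abel
  have K : ∀ (i : Fin 6) ω, d (d (e i * ω)) = e i * d (d ω) := by
    intro i ω
    fin_cases i
    exacts [K0 ω, K1 ω, K2 ω, K3 ω, K4 ω, K5 ω]
  have main : ∀ a ω, d (d (a * ω)) = a * d (d ω) := by
    intro a
    induction a using ExteriorAlgebra.induction with
    | algebraMap r =>
      intro ω
      rw [Algebra.algebraMap_eq_smul_one, smul_mul_assoc, one_mul, map_smul, map_smul,
        smul_mul_assoc, one_mul]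
    | ι x =>
      intro ω
      have hx : ExteriorAlgebra.ι ℝ x = ∑ i : Fin 6, x i • e i := by
        conv_lhs => rw [pi_single_expand x]
        simp [e, map_sum]
      rw [hx, Finset.sum_mul]
      simp only [smul_mul_assoc, map_sum, map_smul, K, Finset.smul_sum]
      rw [Finset.sum_mul]
      simp only [smul_mul_assoc]
    | mul a b ha hb =>
      intro ω
      rw [mul_assoc, ha, hb, mul_assoc]
    | add a b ha hb =>
      intro ω
      rw [add_mul, map_add, map_add, ha, hb, add_mul]
  have ddzero : ∀ a, d (d a) = 0 := by
    intro a
    have := main a 1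
    rwa [mul_one, hone, map_zero, mul_zero] at this
  refine ⟨LinearMap.ext fun a => by simpa using ddzero a, ?_, ?_⟩
  · simp only [key, h1, h2, h3, h4, h5, h6, map_add, map_sub, map_neg, map_zero, sub_mul,
      add_mul, neg_mul, mul_neg, mul_sub, mul_add, mul_assoc, zero_mul, mul_zero, zero_sub,
      sub_zero, neg_neg, esq, esq',
      eswap' 1 0, eswap' 2 0, eswap' 3 0, eswap' 4 0, eswap' 5 0, eswap' 2 1, eswap' 3 1,
      eswap' 4 1, eswap' 5 1, eswap' 3 2, eswap' 4 2, eswap' 5 2, eswap' 4 3, eswap' 5 3,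
      eswap' 5 4,
      eswap 1 0, eswap 2 0, eswap 3 0, eswap 4 0, eswap 5 0, eswap 2 1, eswap 3 1,
      eswap 4 1, eswap 5 1, eswap 3 2, eswap 4 2, eswap 5 2, eswap 4 3, eswap 5 3, eswap 5 4]
    try abel
  · simp only [key, h1, h2, h3, h4, h5, h6, map_add, map_sub, map_neg, map_zero, sub_mul,
      add_mul, neg_mul, mul_neg, mul_sub, mul_add, mul_assoc, zero_mul, mul_zero, zero_sub,
      sub_zero, neg_neg, esq, esq',
      eswap' 1 0, eswap' 2 0, eswap' 3 0, eswap' 4 0, eswap' 5 0, eswap' 2 1, eswap' 3 1,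
      eswap' 4 1, eswap' 5 1, eswap' 3 2, eswap' 4 2, eswap' 5 2, eswap' 4 3, eswap' 5 3,
      eswap' 5 4,
      eswap 1 0, eswap 2 0, eswap 3 0, eswap 4 0, eswap 5 0, eswap 2 1, eswap 3 1,
      eswap 4 1, eswap 5 1, eswap 3 2, eswap 4 2, eswap 5 2, eswap 4 3, eswap 5 3, eswap 5 4]
    try abel
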